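/- Assume b ≠ β. Then the point K₁₀ = (ε/(b − β), 0, ε(1 − b + β)/((b − β)γ)) (a mixed state of altruistic punishers, defectors and exiters, with w = 1 − ε(γ + 1 + β − b)/((b − β)γ)) is an equilibrium of F; moreover at K₁₀ the three payoffs of the strategies present are equal: Π_AP(K₁₀) = Π_D(K₁₀) = ε = Π_E. -/

import Mathlib

noncomputable section

open Polynomial

/-- Payoff of altruistic punishers. -/
def PiAP (γ x y z : ℝ) : ℝ := x + y - γ * z

/-- Payoff of non-punishing cooperators. -/
def PiNC (x y : ℝ) : ℝ := x + y

/-- Payoff of defectors. -/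
def PiD (b β x y : ℝ) : ℝ := (b - β) * x + b * y

/-- First component of the reduced replicator vector field. -/
def fRep (b β γ ε x y z : ℝ) : ℝ :=
  x * ((1 - x) * (PiAP γ x y z - ε) - y * (PiNC x y - ε) - z * (PiD b β x y - ε))

/-- Second component of the reduced replicator vector field. -/
def gRep (b β γ ε x y z : ℝ) : ℝ :=
  y * ((1 - y) * (PiNC x y - ε) - x * (PiAP γ x y z - ε) - z * (PiD b β x y - ε))

/-- Third component of the reduced replicator vector field. -/
def hRep (b β γ ε x y z : ℝ) : ℝ :=
  z * ((1 - z) * (PiD b β x y - ε) - y * (PiNC x y - ε) - x * (PiAP γ x y z - ε))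

/-- The reduced replicator vector field `F : ℝ³ → ℝ³`. -/
def Fv (b β γ ε : ℝ) (p : ℝ × ℝ × ℝ) : ℝ × ℝ × ℝ :=
  (fRep b β γ ε p.1 p.2.1 p.2.2,
   gRep b β γ ε p.1 p.2.1 p.2.2,
   hRep b β γ ε p.1 p.2.1 p.2.2)

/-- Partial derivative in the first variable. -/
def pd1 (F : ℝ → ℝ → ℝ → ℝ) (p : ℝ × ℝ × ℝ) : ℝ :=
  deriv (fun x => F x p.2.1 p.2.2) p.1

/-- Partial derivative in the second variable. -/
def pd2 (F : ℝ → ℝ → ℝ → ℝ) (p : ℝ × ℝ × ℝ) : ℝ :=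
  deriv (fun y => F p.1 y p.2.2) p.2.1

/-- Partial derivative in the third variable. -/
def pd3 (F : ℝ → ℝ → ℝ → ℝ) (p : ℝ × ℝ × ℝ) : ℝ :=
  deriv (fun z => F p.1 p.2.1 z) p.2.2

/-- The Jacobian matrix of the reduced replicator vector field at `p`. -/
def Jac (b β γ ε : ℝ) (p : ℝ × ℝ × ℝ) : Matrix (Fin 3) (Fin 3) ℝ :=
  !![pd1 (fRep b β γ ε) p, pd2 (fRep b β γ ε) p, pd3 (fRep b β γ ε) p;
     pd1 (gRep b β γ ε) p, pd2 (gRep b β γ ε) p, pd3 (gRep b β γ ε) p;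
     pd1 (hRep b β γ ε) p, pd2 (hRep b β γ ε) p, pd3 (hRep b β γ ε) p]

/-- the mixed altruistic-punisher/defector/exiter state `K₁₀`
is an equilibrium, at which all strategies present earn payoff `ε`. -/
theorem K10_equilibrium (b β γ ε : ℝ)
    (hb : 1 < b) (hβ : 0 < β) (hγ : 0 < γ) (hε : ε < 1) (hbβ : b ≠ β) :
    Fv b β γ ε (ε / (b - β), 0, ε * (1 - b + β) / ((b - β) * γ)) = (0, 0, 0) ∧
    PiAP γ (ε / (b - β)) 0 (ε * (1 - b + β) / ((b - β) * γ)) = ε ∧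
    PiD b β (ε / (b - β)) 0 = ε := by
  have hsub : b - β ≠ 0 := sub_ne_zero.mpr hbβ
  have hD : PiD b β (ε / (b - β)) 0 = ε := by
    unfold PiD; field_simp; ring
  have hAP : PiAP γ (ε / (b - β)) 0 (ε * (1 - b + β) / ((b - β) * γ)) = ε := by
    unfold PiAP; field_simp; ring
  refine ⟨?_, hAP, hD⟩
  simp only [Fv, fRep, gRep, hRep, hAP, hD, Prod.mk.injEq]
  refine ⟨?_, ?_, ?_⟩ <;> simp [PiNC] <;> ring
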